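/- Jump-LQR: the Riccati feedback with jump reset attains the lower bound: Under the hypotheses of the jump-LQR lower bound (continuous Aᵃ, Bᵃ, Aᵖ, Bᵖ, symmetric positive definite continuous Q, R, jump matrix H, Riccati solutions Pᵖ on [τ,T] with Pᵖ(T) = P_T and Pᵃ on [t₀,τ] with Pᵃ(τ) = (I + H)ᵀ Pᵖ(τ)(I + H)), define P(t) = Pᵃ(t) for t ∈ [t₀,τ) and P(t) = Pᵖ(t) for t ∈ [τ,T], and let z be the solution of the closed-loop jump system ż = (Aᵃ − Bᵃ R⁻¹ (Bᵃ)ᵀ P) z on [t₀,τ] with z(t₀) = z₀, z(τ⁺) = (I + H) z(τ⁻), and ż = (Aᵖ − Bᵖ R⁻¹ (Bᵖ)ᵀ P) z on [τ,T], with control v(t) = −R(t)⁻¹ B(t)ᵀ P(t) z(t) (with B = Bᵃ before τ and B = Bᵖ after τ). Then ½ ∫_{t₀}^{T} ( z(s)ᵀ Q(s) z(s) + v(s)ᵀ R(s) v(s) ) ds + ½ z(T)ᵀ P_T z(T) = ½ z₀ᵀ Pᵃ(t₀) z₀. -/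

import Mathlib

open Set Matrix

private lemma mulVec_dot {n n' : ℕ} (M : Matrix (Fin n) (Fin n') ℝ) (x : Fin n' → ℝ)
    (y : Fin n → ℝ) : (M *ᵥ x) ⬝ᵥ y = x ⬝ᵥ (Mᵀ *ᵥ y) := by
  rw [dotProduct_comm, dotProduct_mulVec, ← mulVec_transpose]
  exact dotProduct_comm _ _

private lemma hasDerivAt_quad {n : ℕ} (z : ℝ → Fin n → ℝ) (z' : Fin n → ℝ)
    (P : ℝ → Matrix (Fin n) (Fin n) ℝ) (P' : Matrix (Fin n) (Fin n) ℝ) (t : ℝ)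
    (hz : HasDerivAt z z' t)
    (hP : ∀ i j, HasDerivAt (fun s => P s i j) (P' i j) t) :
    HasDerivAt (fun s => z s ⬝ᵥ (P s) *ᵥ (z s))
      (z' ⬝ᵥ (P t) *ᵥ (z t) + z t ⬝ᵥ P' *ᵥ (z t) + z t ⬝ᵥ (P t) *ᵥ z') t := by
  have hzi : ∀ i, HasDerivAt (fun s => z s i) (z' i) t := fun i => hasDerivAt_pi.mp hz i
  have key : HasDerivAt (fun s => ∑ i, z s i * ∑ j, P s i j * z s j)
      (∑ i, (z' i * ∑ j, P t i j * z t j +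
        z t i * ∑ j, (P' i j * z t j + P t i j * z' j))) t := by
    refine HasDerivAt.fun_sum fun i _ => ?_
    exact (hzi i).mul (HasDerivAt.fun_sum fun j _ => (hP i j).mul (hzi j))
  have hfun : (fun s => z s ⬝ᵥ (P s) *ᵥ (z s))
      = fun s => ∑ i, z s i * ∑ j, P s i j * z s j := by
    funext s; simp [dotProduct, mulVec]
  rw [hfun]
  convert key using 1
  simp [dotProduct, mulVec, Finset.sum_add_distrib, mul_add, Finset.mul_sum]
  ring

private lemma posdef_transpose {k : ℕ} {R : Matrix (Fin k) (Fin k) ℝ} (h : R.PosDef) :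
    Rᵀ = R := by
  have := h.isHermitian.eq
  rwa [conjTranspose_eq_transpose_of_trivial] at this

private lemma cost_matrix_form {n m : ℕ} (Q P : Matrix (Fin n) (Fin n) ℝ)
    (B : Matrix (Fin n) (Fin m) ℝ) (R : Matrix (Fin m) (Fin m) ℝ)
    (hRpd : R.PosDef) (hPsym : Pᵀ = P) (z : Fin n → ℝ) :
    z ⬝ᵥ Q *ᵥ z + (-(R⁻¹ *ᵥ (Bᵀ *ᵥ (P *ᵥ z)))) ⬝ᵥ R *ᵥ (-(R⁻¹ *ᵥ (Bᵀ *ᵥ (P *ᵥ z)))) =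
      z ⬝ᵥ (Q + P * B * R⁻¹ * Bᵀ * P) *ᵥ z := by
  have hdet : IsUnit R.det := hRpd.det_pos.ne'.isUnit
  have hRT : Rᵀ = R := posdef_transpose hRpd
  have hu : -(R⁻¹ *ᵥ (Bᵀ *ᵥ (P *ᵥ z))) = -((R⁻¹ * Bᵀ * P) *ᵥ z) := by
    simp [mulVec_mulVec, Matrix.mul_assoc]
  have hM : (R⁻¹ * Bᵀ * P)ᵀ * (R * (R⁻¹ * Bᵀ * P)) = P * B * R⁻¹ * Bᵀ * P := by
    simp only [transpose_mul, transpose_transpose, transpose_nonsing_inv, hRT, hPsym]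
    simp only [Matrix.mul_assoc]
    rw [Matrix.nonsing_inv_mul_cancel_left _ _ hdet]
  rw [hu, neg_dotProduct, mulVec_neg, dotProduct_neg, neg_neg,
    mulVec_dot]
  simp only [mulVec_mulVec]
  rw [hM, add_mulVec, dotProduct_add]

private lemma deriv_val {n m : ℕ} (A Q P P' : Matrix (Fin n) (Fin n) ℝ)
    (B : Matrix (Fin n) (Fin m) ℝ) (R : Matrix (Fin m) (Fin m) ℝ)
    (hRpd : R.PosDef) (hPsym : Pᵀ = P)
    (hRic : -P' = Aᵀ * P + P * A - P * B * R⁻¹ * Bᵀ * P + Q)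
    (z : Fin n → ℝ) :
    ((A - B * R⁻¹ * Bᵀ * P) *ᵥ z) ⬝ᵥ P *ᵥ z + z ⬝ᵥ P' *ᵥ z +
      z ⬝ᵥ P *ᵥ ((A - B * R⁻¹ * Bᵀ * P) *ᵥ z) =
      -(z ⬝ᵥ (Q + P * B * R⁻¹ * Bᵀ * P) *ᵥ z) := by
  have hRT : Rᵀ = R := posdef_transpose hRpd
  have hP' : P' = -(Aᵀ * P + P * A - P * B * R⁻¹ * Bᵀ * P + Q) := by
    rw [← hRic, neg_neg]
  have key : (A - B * R⁻¹ * Bᵀ * P)ᵀ * P + -(Aᵀ * P + P * A - P * B * R⁻¹ * Bᵀ * P + Q)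
      + P * (A - B * R⁻¹ * Bᵀ * P) = -(Q + P * B * R⁻¹ * Bᵀ * P) := by
    simp only [transpose_sub, transpose_mul, transpose_transpose, transpose_nonsing_inv,
      hRT, hPsym]
    simp only [Matrix.mul_assoc]
    noncomm_ring
    simp only [Matrix.mul_assoc]
  rw [mulVec_dot, hP']
  simp only [mulVec_mulVec]
  rw [← dotProduct_add, ← dotProduct_add, ← add_mulVec, ← add_mulVec, key,
    neg_mulVec, dotProduct_neg]

private lemma contOn_matrix {k l : ℕ} {f : ℝ → Matrix (Fin k) (Fin l) ℝ} {s : Set ℝ}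
    (h : ∀ i j, ContinuousOn (fun t => f t i j) s) : ContinuousOn f s :=
  continuousOn_pi.2 fun i => continuousOn_pi.2 fun j => h i j

private lemma contOn_mmul {a b c : ℕ} {f : ℝ → Matrix (Fin a) (Fin b) ℝ}
    {g : ℝ → Matrix (Fin b) (Fin c) ℝ} {s : Set ℝ}
    (hf : ContinuousOn f s) (hg : ContinuousOn g s) :
    ContinuousOn (fun t => f t * g t) s :=
  (continuous_fst.matrix_mul continuous_snd).comp_continuousOn (hf.prodMk hg)

private lemma contOn_quad {n : ℕ} {z : ℝ → Fin n → ℝ} {M : ℝ → Matrix (Fin n) (Fin n) ℝ}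
    {s : Set ℝ} (hz : ContinuousOn z s) (hM : ContinuousOn M s) :
    ContinuousOn (fun t => z t ⬝ᵥ (M t) *ᵥ (z t)) s :=
  (continuous_fst.dotProduct
    (continuous_snd.matrix_mulVec continuous_fst)).comp_continuousOn (hz.prodMk hM)

private lemma contOn_inv {k : ℕ} {R : ℝ → Matrix (Fin k) (Fin k) ℝ} {s : Set ℝ}
    (hc : ContinuousOn R s) (hdet : ∀ t ∈ s, IsUnit (R t).det) :
    ContinuousOn (fun t => (R t)⁻¹) s := by
  intro t ht
  have h2 : ContinuousAt Ring.inverse (R t).det := by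
    rw [Ring.inverse_eq_inv']
    exact continuousAt_inv₀ (hdet t ht).ne_zero
  exact (continuousAt_matrix_inv (R t) h2).comp_continuousWithinAt (hc t ht)

private lemma lqr_interval {n m : ℕ} {a b : ℝ} (hab : a ≤ b)
    (A Q : ℝ → Matrix (Fin n) (Fin n) ℝ) (B : ℝ → Matrix (Fin n) (Fin m) ℝ)
    (R : ℝ → Matrix (Fin m) (Fin m) ℝ)
    (hQc : ∀ i j, ContinuousOn (fun t => Q t i j) (Icc a b))
    (hBc : ∀ i j, ContinuousOn (fun t => B t i j) (Icc a b))
    (hRc : ∀ i j, ContinuousOn (fun t => R t i j) (Icc a b))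
    (hR : ∀ t ∈ Icc a b, (R t).PosDef)
    (P P' : ℝ → Matrix (Fin n) (Fin n) ℝ)
    (hPsym : ∀ t ∈ Icc a b, (P t)ᵀ = P t)
    (hP' : ∀ t ∈ Icc a b, ∀ i j, HasDerivAt (fun s => P s i j) (P' t i j) t)
    (hRic : ∀ t ∈ Icc a b, -P' t = (A t)ᵀ * P t + P t * A t
        - P t * B t * (R t)⁻¹ * (B t)ᵀ * P t + Q t)
    (z : ℝ → Fin n → ℝ)
    (hz : ∀ t ∈ Icc a b, HasDerivAt z ((A t - B t * (R t)⁻¹ * (B t)ᵀ * P t).mulVec (z t)) t) :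
    (∫ s in a..b, (z s ⬝ᵥ (Q s) *ᵥ (z s) +
        (-((R s)⁻¹ *ᵥ ((B s)ᵀ *ᵥ ((P s) *ᵥ (z s))))) ⬝ᵥ
          (R s) *ᵥ (-((R s)⁻¹ *ᵥ ((B s)ᵀ *ᵥ ((P s) *ᵥ (z s))))))) =
      z a ⬝ᵥ (P a) *ᵥ (z a) - z b ⬝ᵥ (P b) *ᵥ (z b) := by
  set g : ℝ → ℝ :=
    fun t => z t ⬝ᵥ (Q t + P t * B t * (R t)⁻¹ * (B t)ᵀ * P t) *ᵥ (z t) with hg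
  have huIcc : uIcc a b = Icc a b := uIcc_of_le hab
  have hzc : ContinuousOn z (Icc a b) := fun t ht => (hz t ht).continuousAt.continuousWithinAt
  have hPc : ContinuousOn P (Icc a b) :=
    contOn_matrix fun i j t ht => (hP' t ht i j).continuousAt.continuousWithinAt
  have hQm : ContinuousOn Q (Icc a b) := contOn_matrix hQc
  have hRm : ContinuousOn R (Icc a b) := contOn_matrix hRc
  have hBm : ContinuousOn B (Icc a b) := contOn_matrix hBc
  have hBT : ContinuousOn (fun t => (B t)ᵀ) (Icc a b) :=
    (continuous_id.matrix_transpose).comp_continuousOn hBm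
  have hRinv : ContinuousOn (fun t => (R t)⁻¹) (Icc a b) :=
    contOn_inv hRm fun t ht => (hR t ht).det_pos.ne'.isUnit
  have hMc : ContinuousOn
      (fun t => Q t + P t * B t * (R t)⁻¹ * (B t)ᵀ * P t) (Icc a b) :=
    hQm.add (contOn_mmul (contOn_mmul (contOn_mmul (contOn_mmul hPc hBm) hRinv) hBT) hPc)
  have hgc : ContinuousOn g (Icc a b) := contOn_quad hzc hMc
  have hderiv : ∀ t ∈ uIcc a b,
      HasDerivAt (fun s => z s ⬝ᵥ (P s) *ᵥ (z s)) (-(g t)) t := by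
    intro t ht
    rw [huIcc] at ht
    have h1 := hasDerivAt_quad z _ P (P' t) t (hz t ht) (hP' t ht)
    convert h1 using 1
    exact (deriv_val (A t) (Q t) (P t) (P' t) (B t) (R t) (hR t ht) (hPsym t ht)
      (hRic t ht) (z t)).symm
  have hint : IntervalIntegrable (fun t => -(g t)) MeasureTheory.volume a b := by
    apply ContinuousOn.intervalIntegrable
    rw [huIcc]
    exact hgc.neg
  have hFTC := intervalIntegral.integral_eq_sub_of_hasDerivAt hderiv hint
  have hneg : ∫ s in a..b, -(g s) = -∫ s in a..b, g s := intervalIntegral.integral_neg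
  have hgint : ∫ s in a..b, g s =
      z a ⬝ᵥ (P a) *ᵥ (z a) - z b ⬝ᵥ (P b) *ᵥ (z b) := by
    rw [hneg] at hFTC
    linarith
  rw [← hgint]
  apply intervalIntegral.integral_congr
  intro s hs
  rw [huIcc] at hs
  exact cost_matrix_form (Q s) (P s) (B s) (R s) (hR s hs) (hPsym s hs) (z s)

/-- Jump-LQR: the Riccati feedback with jump reset attains the lower bound.
With `P = Pᵃ` on `[t₀,τ)` and `P = Pᵖ` on `[τ,T]`, the closed-loop jumping
trajectory `ż = (A − B R⁻¹ Bᵀ P) z` (ante dynamics before `τ`, reset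
`z⁺ = (I + H) z⁻` at `τ`, post dynamics after `τ`) with feedback control
`v = −R⁻¹BᵀPz` achieves cost exactly `½ z₀ᵀ Pᵃ(t₀) z₀`. -/
theorem jump_lqr_feedback_attains_bound
    (n m : ℕ) (t₀ τ tf : ℝ) (h0τ : t₀ < τ) (hτf : τ < tf)
    (Aa Ap Q : ℝ → Matrix (Fin n) (Fin n) ℝ)
    (Ba Bp : ℝ → Matrix (Fin n) (Fin m) ℝ)
    (R : ℝ → Matrix (Fin m) (Fin m) ℝ)
    (H P_T : Matrix (Fin n) (Fin n) ℝ) (hPT : P_Tᵀ = P_T)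
    (hAa : ∀ i j, ContinuousOn (fun t => Aa t i j) (Icc t₀ tf))
    (hAp : ∀ i j, ContinuousOn (fun t => Ap t i j) (Icc t₀ tf))
    (hBa : ∀ i j, ContinuousOn (fun t => Ba t i j) (Icc t₀ tf))
    (hBp : ∀ i j, ContinuousOn (fun t => Bp t i j) (Icc t₀ tf))
    (hQc : ∀ i j, ContinuousOn (fun t => Q t i j) (Icc t₀ tf))
    (hRc : ∀ i j, ContinuousOn (fun t => R t i j) (Icc t₀ tf))
    (hQ : ∀ t ∈ Icc t₀ tf, (Q t).PosDef)
    (hR : ∀ t ∈ Icc t₀ tf, (R t).PosDef)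
    -- Riccati solution on the post-event interval [τ, T]
    (Pp Pp' : ℝ → Matrix (Fin n) (Fin n) ℝ)
    (hPpsym : ∀ t ∈ Icc τ tf, (Pp t)ᵀ = Pp t)
    (hPp' : ∀ t ∈ Icc τ tf, ∀ i j, HasDerivAt (fun s => Pp s i j) (Pp' t i j) t)
    (hRicp : ∀ t ∈ Icc τ tf,
      -Pp' t = (Ap t)ᵀ * Pp t + Pp t * Ap t
        - Pp t * Bp t * (R t)⁻¹ * (Bp t)ᵀ * Pp t + Q t)
    (hPpT : Pp tf = P_T)
    -- Riccati solution on the ante-event interval [t₀, τ], with jump reset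
    (Pa Pa' : ℝ → Matrix (Fin n) (Fin n) ℝ)
    (hPasym : ∀ t ∈ Icc t₀ τ, (Pa t)ᵀ = Pa t)
    (hPa' : ∀ t ∈ Icc t₀ τ, ∀ i j, HasDerivAt (fun s => Pa s i j) (Pa' t i j) t)
    (hRica : ∀ t ∈ Icc t₀ τ,
      -Pa' t = (Aa t)ᵀ * Pa t + Pa t * Aa t
        - Pa t * Ba t * (R t)⁻¹ * (Ba t)ᵀ * Pa t + Q t)
    (hPaτ : Pa τ = (1 + H)ᵀ * Pp τ * (1 + H))
    -- the closed-loop jumping trajectory and the feedback control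
    (z₀ : Fin n → ℝ) (za zp : ℝ → Fin n → ℝ) (v : ℝ → Fin m → ℝ)
    (hz0 : za t₀ = z₀)
    (hza : ∀ t ∈ Icc t₀ τ,
      HasDerivAt za
        ((Aa t - Ba t * (R t)⁻¹ * (Ba t)ᵀ * Pa t).mulVec (za t)) t)
    (hjump : zp τ = (1 + H).mulVec (za τ))
    (hzp : ∀ t ∈ Icc τ tf,
      HasDerivAt zp
        ((Ap t - Bp t * (R t)⁻¹ * (Bp t)ᵀ * Pp t).mulVec (zp t)) t)
    (hva : ∀ t ∈ Ico t₀ τ,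
      v t = -((R t)⁻¹.mulVec ((Ba t)ᵀ.mulVec ((Pa t).mulVec (za t)))))
    (hvp : ∀ t ∈ Icc τ tf,
      v t = -((R t)⁻¹.mulVec ((Bp t)ᵀ.mulVec ((Pp t).mulVec (zp t))))) :
    (1 / 2) *
        ((∫ s in t₀..τ, (za s ⬝ᵥ (Q s).mulVec (za s) + v s ⬝ᵥ (R s).mulVec (v s)))
          + ∫ s in τ..tf, (zp s ⬝ᵥ (Q s).mulVec (zp s) + v s ⬝ᵥ (R s).mulVec (v s)))
        + (1 / 2) * (zp tf ⬝ᵥ P_T.mulVec (zp tf))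
      = (1 / 2) * (z₀ ⬝ᵥ (Pa t₀).mulVec z₀) := by
  have hsub1 : Icc t₀ τ ⊆ Icc t₀ tf := Icc_subset_Icc le_rfl hτf.le
  have hsub2 : Icc τ tf ⊆ Icc t₀ tf := Icc_subset_Icc h0τ.le le_rfl
  have Ia := lqr_interval h0τ.le Aa Q Ba R
    (fun i j => (hQc i j).mono hsub1) (fun i j => (hBa i j).mono hsub1)
    (fun i j => (hRc i j).mono hsub1) (fun t ht => hR t (hsub1 ht))
    Pa Pa' hPasym hPa' hRica za hza
  have Ip := lqr_interval hτf.le Ap Q Bp R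
    (fun i j => (hQc i j).mono hsub2) (fun i j => (hBp i j).mono hsub2)
    (fun i j => (hRc i j).mono hsub2) (fun t ht => hR t (hsub2 ht))
    Pp Pp' hPpsym hPp' hRicp zp hzp
  have hv1 : (∫ s in t₀..τ, (za s ⬝ᵥ (Q s).mulVec (za s) + v s ⬝ᵥ (R s).mulVec (v s)))
      = ∫ s in t₀..τ, (za s ⬝ᵥ (Q s) *ᵥ (za s) +
        (-((R s)⁻¹ *ᵥ ((Ba s)ᵀ *ᵥ ((Pa s) *ᵥ (za s))))) ⬝ᵥ
          (R s) *ᵥ (-((R s)⁻¹ *ᵥ ((Ba s)ᵀ *ᵥ ((Pa s) *ᵥ (za s)))))) := by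
    apply intervalIntegral.integral_congr_ae
    have hne : ∀ᵐ s : ℝ, s ≠ τ := by
      rw [MeasureTheory.ae_iff]
      simpa using MeasureTheory.measure_singleton τ
    filter_upwards [hne] with s hsne hs
    rw [uIoc_of_le h0τ.le] at hs
    rw [hva s ⟨hs.1.le, lt_of_le_of_ne hs.2 hsne⟩]
  have hv2 : (∫ s in τ..tf, (zp s ⬝ᵥ (Q s).mulVec (zp s) + v s ⬝ᵥ (R s).mulVec (v s)))
      = ∫ s in τ..tf, (zp s ⬝ᵥ (Q s) *ᵥ (zp s) +
        (-((R s)⁻¹ *ᵥ ((Bp s)ᵀ *ᵥ ((Pp s) *ᵥ (zp s))))) ⬝ᵥ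
          (R s) *ᵥ (-((R s)⁻¹ *ᵥ ((Bp s)ᵀ *ᵥ ((Pp s) *ᵥ (zp s)))))) := by
    apply intervalIntegral.integral_congr
    intro s hs
    rw [uIcc_of_le hτf.le] at hs
    simp only [hvp s hs]
  have hjmp : za τ ⬝ᵥ (Pa τ) *ᵥ (za τ) = zp τ ⬝ᵥ (Pp τ) *ᵥ (zp τ) := by
    rw [hPaτ, hjump, Matrix.mul_assoc, ← mulVec_mulVec, ← mulVec_dot, ← mulVec_mulVec]
  rw [hv1, hv2, Ia, Ip, ← hz0, ← hPpT, hjmp]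
  ring
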